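/- For a simple arrangement H̃ with lattice of flats L = L_{H̃}, the ring of global sections of the structure sheaf A (stalks Sym R^F, restrictions by setting variables outside the smaller flat to zero) is canonically isomorphic as a graded ring to the face ring R[Δ_{H̃}] of the matroid complex, via the map sending e_i to the i-th standard basis vector of R^F if i ∈ F and to 0 otherwise, on each stalk. -/

import Mathlib

open MvPolynomial

variable {I : Type} [Fintype I] [DecidableEq I]

def IsFlat (V : AffineSubspace ℝ (I → ℝ)) (F : Finset I) : Prop :=
  ∃ x ∈ V, ∀ i : I, i ∈ F ↔ x i = 0

def Essential (V : AffineSubspace ℝ (I → ℝ)) : Prop :=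
  ∀ i : I, ∃ x ∈ V, ∃ y ∈ V, x i ≠ y i

noncomputable def resF (V : AffineSubspace ℝ (I → ℝ)) (F : Finset I) :
    V.direction →ₗ[ℝ] ({i : I // i ∈ F} → ℝ) :=
  (LinearMap.funLeft ℝ ℝ (fun i : {i : I // i ∈ F} => (i : I))).comp V.direction.subtype

def IsSimple (V : AffineSubspace ℝ (I → ℝ)) : Prop :=
  ∀ F : Finset I, IsFlat V F →
    F.card + Module.finrank ℝ (LinearMap.ker (resF V F)) = Module.finrank ℝ V.direction

noncomputable def faceIdeal (Δ : Set (Finset I)) : Ideal (MvPolynomial I ℝ) :=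
  Ideal.span {p | ∃ S : Finset I, S ∉ Δ ∧ p = ∏ i ∈ S, (X i : MvPolynomial I ℝ)}

def powFaces (F : Finset I) : Set (Finset I) := {S | S ⊆ F}

/-- The localization of the structure sheaf at the lattice of flats:  the map from
`ℝ[e_i : i ∈ I]` to the product of the stalks `A(F) ≅ Sym ℝ^F` over all flats `F`.
On the stalk at `F` it sends `e_i` to the `i`-th standard coordinate of `ℝ^F` when
`i ∈ F` and to `0` otherwise. -/
noncomputable def toStalks (V : AffineSubspace ℝ (I → ℝ)) :
    MvPolynomial I ℝ →+*
      ((F : {F : Finset I // IsFlat V F}) → MvPolynomial I ℝ ⧸ faceIdeal (powFaces F.1)) :=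
  Pi.ringHom fun F => Ideal.Quotient.mk (faceIdeal (powFaces F.1))

section Aux

variable {I : Type} [Fintype I] [DecidableEq I]

/-- indicator finsupp of a finset -/
noncomputable def indic (S : Finset I) : I →₀ ℕ := ∑ i ∈ S, Finsupp.single i 1

lemma indic_apply (S : Finset I) (j : I) : indic S j = if j ∈ S then 1 else 0 := by
  classical
  rw [indic, Finset.sum_apply']
  simp [Finsupp.single_apply]

lemma support_indic (S : Finset I) : (indic S).support = S := by
  ext i
  simp [Finsupp.mem_support_iff, indic_apply]

lemma prod_X_eq (S : Finset I) :
    (∏ i ∈ S, (X i : MvPolynomial I ℝ)) = monomial (indic S) 1 := by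
  classical
  induction S using Finset.cons_induction with
  | empty => simp [indic]
  | cons a s ha ih =>
    rw [Finset.prod_cons, ih,
      show (X a : MvPolynomial I ℝ) = monomial (Finsupp.single a 1) 1 from rfl,
      monomial_mul, one_mul]
    simp only [indic, Finset.sum_cons]

/-- the ideal of polynomials all of whose monomials have non-face support -/
noncomputable def nfIdeal (Δ : Set (Finset I)) (hΔ : ∀ ⦃S T : Finset I⦄, T ⊆ S → S ∈ Δ → T ∈ Δ) :
    Ideal (MvPolynomial I ℝ) where
  carrier := {p | ∀ d ∈ p.support, ¬ d.support ∈ Δ}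
  zero_mem' := by simp
  add_mem' := by
    intro a b ha hb d hd
    have h := MvPolynomial.support_add hd
    rcases Finset.mem_union.1 h with h1 | h1
    · exact ha d h1
    · exact hb d h1
  smul_mem' := by
    intro c p hp d hd
    rw [smul_eq_mul] at hd
    have h := MvPolynomial.support_mul c p hd
    rw [Finset.mem_add] at h
    obtain ⟨d1, h1, d2, h2, rfl⟩ := h
    intro hmem
    have hsub : d2.support ⊆ (d1 + d2).support := by
      intro i hi
      rw [Finsupp.mem_support_iff] at hi ⊢
      simp only [Finsupp.add_apply]
      omega
    exact hp d2 h2 (hΔ hsub hmem)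

lemma mem_faceIdeal_iff {Δ : Set (Finset I)}
    (hΔ : ∀ ⦃S T : Finset I⦄, T ⊆ S → S ∈ Δ → T ∈ Δ) (p : MvPolynomial I ℝ) :
    p ∈ faceIdeal Δ ↔ ∀ d ∈ p.support, ¬ d.support ∈ Δ := by
  constructor
  · intro hp
    have hle : faceIdeal Δ ≤ nfIdeal Δ hΔ := by
      rw [faceIdeal, Ideal.span_le]
      rintro _ ⟨S, hS, rfl⟩ d hd
      rw [prod_X_eq, support_monomial] at hd
      simp only [one_ne_zero, if_false, Finset.mem_singleton] at hd
      subst hd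
      rw [support_indic]
      exact hS
    exact hle hp
  · intro h
    rw [← p.support_sum_monomial_coeff]
    apply Ideal.sum_mem
    intro d hd
    have hdd : indic d.support + (d - indic d.support) = d := by
      ext i
      rw [Finsupp.add_apply, Finsupp.tsub_apply, indic_apply]
      by_cases hi : i ∈ d.support
      · have h1 : d i ≠ 0 := Finsupp.mem_support_iff.1 hi
        simp only [hi, if_true]
        omega
      · have h1 : d i = 0 := Finsupp.notMem_support_iff.1 hi
        simp [hi, h1]
    have key : (monomial d (coeff d p) : MvPolynomial I ℝ) =
        (∏ i ∈ d.support, X i) * monomial (d - indic d.support) (coeff d p) := by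
      rw [prod_X_eq, monomial_mul, one_mul, hdd]
    rw [key]
    exact Ideal.mul_mem_right _ _ (Ideal.subset_span ⟨d.support, h d hd, rfl⟩)

lemma powFaces_down (F : Finset I) :
    ∀ ⦃S T : Finset I⦄, T ⊆ S → S ∈ powFaces F → T ∈ powFaces F :=
  fun _ _ hTS hS => hTS.trans hS

lemma flats_down (V : AffineSubspace ℝ (I → ℝ)) (hsimple : IsSimple V)
    {G F : Finset I} (hGF : G ⊆ F) (hF : IsFlat V F) : IsFlat V G := by
  classical
  obtain ⟨x, hxV, hx⟩ := hF
  have hsurj : Function.Surjective (resF V F) := by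
    have h1 := hsimple F ⟨x, hxV, hx⟩
    have h2 := LinearMap.finrank_range_add_finrank_ker (resF V F)
    rw [← LinearMap.range_eq_top]
    apply Submodule.eq_top_of_finrank_eq
    have hcard : Module.finrank ℝ ({i : I // i ∈ F} → ℝ) = F.card := by
      rw [Module.finrank_pi]
      exact Fintype.card_coe F
    rw [hcard]
    omega
  obtain ⟨v, hv⟩ := hsurj (fun j => if (j : I) ∈ G then 0 else 1)
  have hvi : ∀ i (hi : i ∈ F), (v : I → ℝ) i = if i ∈ G then 0 else 1 :=
    fun i hi => congrFun hv ⟨i, hi⟩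
  set B : Set ℝ := {0} ∪ ⋃ i ∈ {i : I | i ∉ F}, {t : ℝ | x i + t * (v : I → ℝ) i = 0} with hB
  have hBfin : B.Finite := by
    apply Set.Finite.union (Set.finite_singleton 0)
    apply Set.Finite.biUnion (Set.toFinite _)
    intro i hi
    apply Set.Subsingleton.finite
    intro a ha b hb
    simp only [Set.mem_setOf_eq] at ha hb hi
    have hxi : x i ≠ 0 := fun h => hi ((hx i).2 h)
    have hvi0 : (v : I → ℝ) i ≠ 0 := by
      intro h0
      apply hxi
      simpa [h0] using ha
    have heq : a * (v : I → ℝ) i = b * (v : I → ℝ) i := by linarith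
    exact mul_right_cancel₀ hvi0 heq
  obtain ⟨t, ht⟩ := hBfin.exists_notMem
  have ht0 : t ≠ 0 := fun h => ht (Or.inl (by simp [h]))
  refine ⟨t • (v : I → ℝ) + x, ?_, ?_⟩
  · have hm := AffineSubspace.vadd_mem_of_mem_direction (V.direction.smul_mem t v.2) hxV
    simpa [vadd_eq_add] using hm
  · intro i
    by_cases hiF : i ∈ F
    · by_cases hiG : i ∈ G
      · simp [hiG, hvi i hiF, (hx i).1 hiF]
      · simp [hiG, hvi i hiF, (hx i).1 hiF, ht0]
    · have hiG : i ∉ G := fun h => hiF (hGF h)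
      have hne : t * (v : I → ℝ) i + x i ≠ 0 := by
        intro h0
        apply ht
        refine Or.inr (Set.mem_biUnion (show i ∈ {i : I | i ∉ F} from hiF) ?_)
        show x i + t * (v : I → ℝ) i = 0
        linarith
      simp only [Pi.add_apply, Pi.smul_apply, smul_eq_mul]
      simp [hiG, hne]

/-- truncation of a polynomial to monomials supported in `F` -/
noncomputable def trunc (F : Finset I) (q : MvPolynomial I ℝ) : MvPolynomial I ℝ :=
  ∑ d ∈ q.support.filter (fun d => d.support ⊆ F), monomial d (coeff d q)

lemma coeff_trunc (F : Finset I) (q : MvPolynomial I ℝ) (d : I →₀ ℕ) :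
    coeff d (trunc F q) = if d.support ⊆ F then coeff d q else 0 := by
  classical
  rw [trunc, coeff_sum]
  simp only [coeff_monomial]
  rw [Finset.sum_ite_eq' _ d (fun e => coeff e q)]
  by_cases h : d.support ⊆ F
  · by_cases hd : d ∈ q.support
    · simp [Finset.mem_filter, h, hd]
    · simp [Finset.mem_filter, h, hd, MvPolynomial.notMem_support_iff.1 hd]
  · simp [Finset.mem_filter, h]

end Aux


/-- for a simple arrangement, the ring of global sections of the structure
sheaf `A` on the lattice of flats is canonically isomorphic to the face ring
`ℝ[Δ_{H̃}]` of the matroid complex (whose faces are exactly the flats).  Concretely,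
the canonical map from `ℝ[e_i : i ∈ I]` to the compatible families of stalk elements
is surjective onto the sections (compatible families) and has kernel the face ideal,
exhibiting the desired isomorphism of graded rings. -/
theorem stmt11 (V : AffineSubspace ℝ (I → ℝ))
    (hne : (V : Set (I → ℝ)).Nonempty) (hess : Essential V)
    (hsimple : IsSimple V) :
    RingHom.ker (toStalks V) = faceIdeal {S : Finset I | IsFlat V S} ∧
    Set.range (toStalks V) =
      {s | ∀ (E F : {F : Finset I // IsFlat V F}) (h : E.1 ⊆ F.1)
          (hle : faceIdeal (powFaces F.1) ≤ faceIdeal (powFaces E.1)),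
        Ideal.Quotient.factor hle (s F) = s E} := by
  classical
  have hflatdown : ∀ ⦃S T : Finset I⦄, T ⊆ S → S ∈ {S : Finset I | IsFlat V S} →
      T ∈ {S : Finset I | IsFlat V S} := fun S T hTS hS => flats_down V hsimple hTS hS
  constructor
  · ext p
    rw [RingHom.mem_ker]
    constructor
    · intro h
      rw [mem_faceIdeal_iff hflatdown]
      intro d hd hSflat
      have h2 := congrFun h ⟨d.support, hSflat⟩
      have hmem : p ∈ faceIdeal (powFaces (d.support)) :=
        Ideal.Quotient.eq_zero_iff_mem.1 h2
      exact (mem_faceIdeal_iff (powFaces_down _) p).1 hmem d hd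
        (show d.support ⊆ d.support from subset_rfl)
    · intro h
      funext F
      show Ideal.Quotient.mk _ p = 0
      rw [Ideal.Quotient.eq_zero_iff_mem, mem_faceIdeal_iff (powFaces_down F.1)]
      intro d hd hmem
      exact (mem_faceIdeal_iff hflatdown p).1 h d hd
        (flats_down V hsimple hmem F.2)
  · ext s
    constructor
    · rintro ⟨p, rfl⟩ E F hEF hle
      exact Ideal.Quotient.factor_mk hle p
    · intro hs
      have hsurjq : ∀ F : {F : Finset I // IsFlat V F},
          ∃ q, Ideal.Quotient.mk (faceIdeal (powFaces F.1)) q = s F :=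
        fun F => Ideal.Quotient.mk_surjective (s F)
      choose q hq using hsurjq
      haveI : Fintype {F : Finset I // IsFlat V F} := Fintype.ofFinite _
      set P : {F : Finset I // IsFlat V F} → MvPolynomial I ℝ :=
        fun F => trunc F.1 (q F) with hP
      set T : Finset (I →₀ ℕ) := Finset.univ.biUnion (fun F => (P F).support) with hT
      set c : (I →₀ ℕ) → ℝ :=
        fun d => if h : IsFlat V d.support then coeff d (P ⟨d.support, h⟩) else 0 with hc
      set p : MvPolynomial I ℝ := ∑ d ∈ T, monomial d (c d) with hp
      have coeff_p : ∀ d, coeff d p = if d ∈ T then c d else 0 := by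
        intro d
        rw [hp, coeff_sum]
        simp only [coeff_monomial]
        rw [Finset.sum_ite_eq' T d c]
      have hle' : ∀ (E F : {F : Finset I // IsFlat V F}), E.1 ⊆ F.1 →
          faceIdeal (powFaces F.1) ≤ faceIdeal (powFaces E.1) := by
        intro E F hEF x hx
        rw [mem_faceIdeal_iff (powFaces_down F.1)] at hx
        rw [mem_faceIdeal_iff (powFaces_down E.1)]
        intro d hd hmem
        exact hx d hd (hmem.trans hEF)
      have compat : ∀ (E F : {F : Finset I // IsFlat V F}) (hEF : E.1 ⊆ F.1),
          q F - q E ∈ faceIdeal (powFaces E.1) := by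
        intro E F hEF
        have h1 := hs E F hEF (hle' E F hEF)
        rw [← hq E, ← hq F, Ideal.Quotient.factor_mk] at h1
        exact (Ideal.Quotient.eq).1 h1
      have main : ∀ F : {F : Finset I // IsFlat V F},
          p - q F ∈ faceIdeal (powFaces F.1) := by
        intro F
        rw [mem_faceIdeal_iff (powFaces_down F.1)]
        intro d hd hmem
        have hSf : IsFlat V (d.support) := flats_down V hsimple hmem F.2
        set S : {F : Finset I // IsFlat V F} := ⟨d.support, hSf⟩ with hS
        have e1 : coeff d (q F) = coeff d (q S) := by
          have hc2 := compat S F hmem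
          have h0 : coeff d (q F - q S) = 0 := by
            by_contra h0
            exact (mem_faceIdeal_iff (powFaces_down _) _).1 hc2 d
              (MvPolynomial.mem_support_iff.2 h0)
              (show d.support ⊆ d.support from subset_rfl)
          rw [coeff_sub] at h0
          linarith
        have e2 : coeff d (q S) = coeff d (P S) := by
          rw [hP]
          simp only
          rw [coeff_trunc]
          simp [hS, subset_rfl]
        have e3 : coeff d p = coeff d (P S) := by
          rw [coeff_p]
          by_cases hdT : d ∈ T
          · rw [if_pos hdT, hc]
            simp only
            rw [dif_pos hSf]
          · rw [if_neg hdT]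
            have hns : d ∉ (P S).support :=
              fun hmem2 => hdT (Finset.mem_biUnion.2 ⟨S, Finset.mem_univ _, hmem2⟩)
            rw [MvPolynomial.notMem_support_iff.1 hns]
        exact (MvPolynomial.mem_support_iff.1 hd)
          (by rw [coeff_sub, e3, e1, e2, sub_self])
      refine ⟨p, funext fun F => ?_⟩
      show Ideal.Quotient.mk _ p = s F
      rw [← hq F]
      exact (Ideal.Quotient.eq).2 (main F)
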